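/- Let f(x,y) = xy + (1/3)x³y² + x⁶ on ℂ². Then the singular locus Sing f = {∂f/∂x = ∂f/∂y = 0} consists of exactly 8 points, and each of them is a nondegenerate (Morse) critical point of f. -/

import Mathlib

/-- The polynomial `f(x,y) = xy + (1/3)x³y² + x⁶`. -/
noncomputable def F16 (x y : ℂ) : ℂ := x * y + (1 / 3) * x ^ 3 * y ^ 2 + x ^ 6

/-- Partial derivative of `F16` in `x`. -/
noncomputable def F16x (p : ℂ × ℂ) : ℂ := deriv (fun x => F16 x p.2) p.1

/-- Partial derivative of `F16` in `y`. -/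
noncomputable def F16y (p : ℂ × ℂ) : ℂ := deriv (fun y => F16 p.1 y) p.2

/-- Singular locus of `F16`. -/
noncomputable def Sing16 : Set (ℂ × ℂ) := {p | F16x p = 0 ∧ F16y p = 0}

/-- Hessian determinant of `F16`. -/
noncomputable def Hess16 (p : ℂ × ℂ) : ℂ :=
  deriv (fun x => F16x (x, p.2)) p.1 * deriv (fun y => F16y (p.1, y)) p.2
    - deriv (fun y => F16x (p.1, y)) p.2 * deriv (fun x => F16y (x, p.2)) p.1

lemma F16x_eq (x y : ℂ) : F16x (x, y) = y + x ^ 2 * y ^ 2 + 6 * x ^ 5 := by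
  have h : HasDerivAt (fun x : ℂ => F16 x y) (y + x ^ 2 * y ^ 2 + 6 * x ^ 5) x := by
    have h0 : HasDerivAt (fun x : ℂ => x * y + (1 / 3) * x ^ 3 * y ^ 2 + x ^ 6)
        (1 * y + (1 / 3) * (3 * x ^ 2) * y ^ 2 + 6 * x ^ 5) x :=
      (((hasDerivAt_id x).mul_const y).add
        ((((hasDerivAt_pow 3 x).const_mul (1/3 : ℂ)).mul_const (y ^ 2)))).add
        (by simpa using hasDerivAt_pow 6 x)
    have he : (fun x : ℂ => F16 x y) = fun x : ℂ => x * y + (1 / 3) * x ^ 3 * y ^ 2 + x ^ 6 := by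
      ext t; simp [F16]
    rw [he]
    convert h0 using 1
    ring
  simpa [F16x] using h.deriv

lemma F16y_eq (x y : ℂ) : F16y (x, y) = x + (2 / 3) * x ^ 3 * y := by
  have h : HasDerivAt (fun y : ℂ => F16 x y) (x + (2 / 3) * x ^ 3 * y) y := by
    have h0 : HasDerivAt (fun y : ℂ => x * y + (1 / 3) * x ^ 3 * y ^ 2 + x ^ 6)
        (x * 1 + (1 / 3) * x ^ 3 * ((2 : ℕ) * y ^ (2 - 1)) + 0) y :=
      (((hasDerivAt_id' _).const_mul x).add
        (((hasDerivAt_pow 2 y).const_mul ((1/3 : ℂ) * x ^ 3)))).add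
        (hasDerivAt_const y (x ^ 6))
    have he : (fun y : ℂ => F16 x y) = fun y : ℂ => x * y + (1 / 3) * x ^ 3 * y ^ 2 + x ^ 6 := by
      ext t; simp [F16]
    rw [he]
    convert h0 using 1
    push_cast
    ring
  simpa [F16y] using h.deriv

lemma Hess16_eq (x y : ℂ) :
    Hess16 (x, y) = (2 * x * y ^ 2 + 30 * x ^ 4) * ((2 / 3) * x ^ 3)
      - (1 + 2 * x ^ 2 * y) ^ 2 := by
  have hxx : deriv (fun t => F16x (t, y)) x = 2 * x * y ^ 2 + 30 * x ^ 4 := by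
    have he : (fun t => F16x (t, y)) = fun t : ℂ => y + t ^ 2 * y ^ 2 + 6 * t ^ 5 := by
      ext t; exact F16x_eq t y
    rw [he]
    have h0 : HasDerivAt (fun t : ℂ => y + t ^ 2 * y ^ 2 + 6 * t ^ 5)
        (0 + 2 * x * y ^ 2 + 6 * (5 * x ^ 4)) x :=
      ((hasDerivAt_const x y).add (by simpa using (hasDerivAt_pow 2 x).mul_const (y ^ 2))).add
        ((hasDerivAt_pow 5 x).const_mul 6)
    rw [h0.deriv]; ring
  have hyy : deriv (fun t => F16y (x, t)) y = (2 / 3) * x ^ 3 := by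
    have he : (fun t => F16y (x, t)) = fun t : ℂ => x + (2 / 3) * x ^ 3 * t := by
      ext t; exact F16y_eq x t
    rw [he]
    have h0 : HasDerivAt (fun t : ℂ => x + (2 / 3) * x ^ 3 * t) (0 + (2/3) * x ^ 3 * 1) y :=
      (hasDerivAt_const y x).add ((hasDerivAt_id' _).const_mul ((2/3 : ℂ) * x ^ 3))
    rw [h0.deriv]; ring
  have hxy : deriv (fun t => F16x (x, t)) y = 1 + 2 * x ^ 2 * y := by
    have he : (fun t => F16x (x, t)) = fun t : ℂ => t + x ^ 2 * t ^ 2 + 6 * x ^ 5 := by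
      ext t; exact F16x_eq x t
    rw [he]
    have h0 : HasDerivAt (fun t : ℂ => t + x ^ 2 * t ^ 2 + 6 * x ^ 5)
        (1 + x ^ 2 * ((2 : ℕ) * y ^ (2 - 1)) + 0) y :=
      ((hasDerivAt_id' _).add ((hasDerivAt_pow 2 y).const_mul (x ^ 2))).add
        (hasDerivAt_const y (6 * x ^ 5))
    rw [h0.deriv]; push_cast; ring
  have hyx : deriv (fun t => F16y (t, y)) x = 1 + 2 * x ^ 2 * y := by
    have he : (fun t => F16y (t, y)) = fun t : ℂ => t + (2 / 3) * t ^ 3 * y := by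
      ext t; exact F16y_eq t y
    rw [he]
    have h0 : HasDerivAt (fun t : ℂ => t + (2 / 3) * t ^ 3 * y)
        (1 + (2/3) * (3 * x ^ 2) * y) x :=
      (hasDerivAt_id' _).add (((hasDerivAt_pow 3 x).const_mul (2/3 : ℂ)).mul_const y)
    rw [h0.deriv]; ring
  simp only [Hess16, hxx, hyy, hxy, hyx]
  ring

/-- The roots of `x^7 = -1/8`. -/
noncomputable def R16 : Set ℂ := {x : ℂ | x ^ 7 = -(1/8)}

lemma R16_card : R16.Finite ∧ R16.ncard = 7 := by
  classical
  have hp : R16 = (Polynomial.X ^ 7 - Polynomial.C (-(1/8) : ℂ)).rootSet ℂ := by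
    ext x
    rw [Polynomial.mem_rootSet]
    constructor
    · intro hx
      refine ⟨Polynomial.X_pow_sub_C_ne_zero (by norm_num) _, ?_⟩
      rw [map_sub, map_pow, Polynomial.aeval_X, Polynomial.aeval_C, hx]; simp
    · rintro ⟨-, hx⟩
      rw [map_sub, map_pow, Polynomial.aeval_X, Polynomial.aeval_C, sub_eq_zero] at hx
      simp only [R16, Set.mem_setOf_eq]
      simpa using hx
  have hsep : (Polynomial.X ^ 7 - Polynomial.C (-(1/8) : ℂ)).Separable := by
    apply Polynomial.separable_X_pow_sub_C
    · norm_num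
    · norm_num
  have hsplit : ((Polynomial.X ^ 7 - Polynomial.C (-(1/8) : ℂ)).map (algebraMap ℂ ℂ)).Splits
      := IsAlgClosed.splits _
  have hcard := Polynomial.card_rootSet_eq_natDegree hsep hsplit
  rw [Polynomial.natDegree_X_pow_sub_C] at hcard
  have hfin : R16.Finite := by
    rw [hp]; exact Set.toFinite _
  refine ⟨hfin, ?_⟩
  rw [hp, Set.ncard_eq_toFinset_card', Set.toFinset_card, hcard]

lemma zero_not_R16 : (0 : ℂ) ∉ R16 := by
  simp [R16]

lemma Sing16_eq : Sing16 = insert ((0 : ℂ), (0 : ℂ))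
    ((fun x : ℂ => (x, -3 / (2 * x ^ 2))) '' R16) := by
  ext ⟨x, y⟩
  simp only [Sing16, Set.mem_setOf_eq, F16x_eq, F16y_eq, Set.mem_insert_iff,
    Set.mem_image, Prod.mk.injEq, R16, Set.mem_setOf_eq]
  constructor
  · rintro ⟨h1, h2⟩
    by_cases hx : x = 0
    · left
      subst hx
      simp at h1
      exact ⟨rfl, by linear_combination h1⟩
    · right
      have hy : x ^ 2 * y = -(3/2) := by
        have h2' : x * (1 + (2/3) * x ^ 2 * y) = 0 := by linear_combination h2
        rcases mul_eq_zero.1 h2' with h | h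
        · exact absurd h hx
        · linear_combination (3/2 : ℂ) * h
      refine ⟨x, ?_, rfl, ?_⟩
      · -- x^2 * h1 : x^2 y + x^4 y^2 + 6 x^7 = 0 ; substitute
        have : 6 * x ^ 7 + 3/4 = 0 := by
          linear_combination x ^ 2 * h1 + (1/2 - x ^ 2 * y) * hy
        linear_combination (1/6 : ℂ) * this
      · field_simp
        linear_combination (-2 : ℂ) * hy
  · rintro (⟨hx, hy⟩ | ⟨t, ht, rfl, rfl⟩)
    · subst hx; subst hy; norm_num
    · have ht2 : t ≠ 0 := fun h => zero_not_R16 (h ▸ ht)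
      constructor
      · field_simp
        ring_nf
        linear_combination (24 : ℂ) * ht
      · field_simp
        ring
  
/-- The singular locus of `f(x,y) = xy + (1/3)x³y² + x⁶` consists of exactly
8 points, and each of them is a nondegenerate (Morse) critical point of `f`. -/
theorem stmt_16 :
    Sing16.Finite ∧ Sing16.ncard = 8 ∧ ∀ p ∈ Sing16, Hess16 p ≠ 0 := by
  obtain ⟨hRfin, hRcard⟩ := R16_card
  have hinj : Set.InjOn (fun x : ℂ => (x, -3 / (2 * x ^ 2))) R16 := by
    intro a _ b _ h
    exact congrArg Prod.fst h
  have himfin : ((fun x : ℂ => (x, -3 / (2 * x ^ 2))) '' R16).Finite := hRfin.image _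
  have hnotmem : ((0 : ℂ), (0 : ℂ)) ∉ (fun x : ℂ => (x, -3 / (2 * x ^ 2))) '' R16 := by
    rintro ⟨t, ht, h⟩
    have : t = 0 := congrArg Prod.fst h
    exact zero_not_R16 (this ▸ ht)
  refine ⟨?_, ?_, ?_⟩
  · rw [Sing16_eq]; exact himfin.insert _
  · rw [Sing16_eq, Set.ncard_insert_of_notMem hnotmem himfin,
      Set.ncard_image_of_injOn hinj, hRcard]
  · intro p hp
    rw [Sing16_eq] at hp
    rcases hp with h | ⟨t, ht, h⟩
    · subst h
      rw [Hess16_eq]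
      norm_num
    · subst h
      rw [Hess16_eq]
      have ht2 : t ≠ 0 := by rintro rfl; exact zero_not_R16 ht
      have hy : t ^ 2 * (-3 / (2 * t ^ 2)) = -(3/2) := by field_simp
      have ht' : t ^ 7 = -(1/8) := ht
      have key : ∀ v : ℂ, t ^ 2 * v = -(3/2) →
          (2 * t * v ^ 2 + 30 * t ^ 4) * ((2 / 3) * t ^ 3) - (1 + 2 * t ^ 2 * v) ^ 2
            = -(7/2) := by
        intro v hv
        linear_combination (-(8/3) * t ^ 2 * v) * hv + 20 * ht'
      rw [key _ hy]
      norm_num
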